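/- Let U ⊆ ℝ³ be open and let u : U → ℝ be C² with Tu = ∂_t u ≡ 1 on U. Then at every point of U where ‖∇_H u‖ ≠ 0, the horizontal Gauss curvature and the symplectic distortion of the level surface of u satisfy K = (4/‖∇_H u‖)·Q. In particular, K vanishes at such a point if and only if Q vanishes there. -/

import Mathlib

/-- The Heisenberg vector field `X = ∂ₓ + 2y ∂ₜ` applied to `u`. -/
noncomputable def Xd (u : ℝ × ℝ × ℝ → ℝ) (p : ℝ × ℝ × ℝ) : ℝ :=
  fderiv ℝ u p (1, 0, 2 * p.2.1)

/-- The Heisenberg vector field `Y = ∂_y − 2x ∂ₜ` applied to `u`. -/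
noncomputable def Yd (u : ℝ × ℝ × ℝ → ℝ) (p : ℝ × ℝ × ℝ) : ℝ :=
  fderiv ℝ u p (0, 1, -(2 * p.1))

/-- The Reeb vector field `T = ∂ₜ` applied to `u`. -/
noncomputable def Td (u : ℝ × ℝ × ℝ → ℝ) (p : ℝ × ℝ × ℝ) : ℝ :=
  fderiv ℝ u p (0, 0, 1)

/-- The norm of the horizontal gradient `‖∇_H u‖ = √((Xu)² + (Yu)²)`. -/
noncomputable def gradH (u : ℝ × ℝ × ℝ → ℝ) (p : ℝ × ℝ × ℝ) : ℝ :=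
  Real.sqrt ((Xd u p) ^ 2 + (Yd u p) ^ 2)

/-- The horizontal mean curvature `H_u = X(Xu/‖∇_H u‖) + Y(Yu/‖∇_H u‖)`. -/
noncomputable def Hmean (u : ℝ × ℝ × ℝ → ℝ) (p : ℝ × ℝ × ℝ) : ℝ :=
  Xd (fun z => Xd u z / gradH u z) p + Yd (fun z => Yd u z / gradH u z) p

/-- The derivative along `E₁ = −q̄·X + p̄·Y` of a function `v`. -/
noncomputable def E1d (u v : ℝ × ℝ × ℝ → ℝ) (p : ℝ × ℝ × ℝ) : ℝ :=
  -(Yd u p / gradH u p) * Xd v p + (Xd u p / gradH u p) * Yd v p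

/-- The horizontal Gauss curvature `K_u = −4E₁(Tu/‖∇_H u‖) − 16(Tu/‖∇_H u‖)²`. -/
noncomputable def Kgauss (u : ℝ × ℝ × ℝ → ℝ) (p : ℝ × ℝ × ℝ) : ℝ :=
  -4 * E1d u (fun z => Td u z / gradH u z) p - 16 * (Td u p / gradH u p) ^ 2

/-- The symplectic distortion `Q_u = X(Yu/‖∇_H u‖) − Y(Xu/‖∇_H u‖)`. -/
noncomputable def Qdist (u : ℝ × ℝ × ℝ → ℝ) (p : ℝ × ℝ × ℝ) : ℝ :=
  Xd (fun z => Yd u z / gradH u z) p - Yd (fun z => Xd u z / gradH u z) p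

/-- The Heisenberg dilation `D_δ(x,y,t) = (δx, δy, δ²t)`. -/
def Ddil (δ : ℝ) (p : ℝ × ℝ × ℝ) : ℝ × ℝ × ℝ :=
  (δ * p.1, δ * p.2.1, δ ^ 2 * p.2.2)

/-- For a surface normalized by `Tu ≡ 1` in the Heisenberg group, the horizontal
Gauss curvature and the symplectic distortion satisfy `K = (4/‖∇_H u‖)·Q`;
in particular `K = 0 ↔ Q = 0` at noncharacteristic points. -/

private lemma fderiv_div_apply' {f h : ℝ × ℝ × ℝ → ℝ} {p v : ℝ × ℝ × ℝ}
    (hf : DifferentiableAt ℝ f p) (hh : DifferentiableAt ℝ h p) (h0 : h p ≠ 0) :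
    fderiv ℝ (fun z => f z / h z) p v
      = (fderiv ℝ f p v * h p - f p * fderiv ℝ h p v) / h p ^ 2 := by
  have Hinv : HasFDerivAt (fun z => (h z)⁻¹)
      ((-(h p ^ 2)⁻¹) • fderiv ℝ h p) p :=
    (hasDerivAt_inv h0).comp_hasFDerivAt p hh.hasFDerivAt
  have Hmul := hf.hasFDerivAt.mul Hinv
  have H : HasFDerivAt (fun z => f z / h z)
      (f p • ((-(h p ^ 2)⁻¹) • fderiv ℝ h p) + ((h p)⁻¹ : ℝ) • fderiv ℝ f p) p := by
    simp only [div_eq_mul_inv]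
    exact Hmul
  rw [H.fderiv]
  simp only [ContinuousLinearMap.add_apply, ContinuousLinearMap.smul_apply, smul_eq_mul]
  field_simp
  ring

private lemma xd_div' {f h : ℝ × ℝ × ℝ → ℝ} {p : ℝ × ℝ × ℝ}
    (hf : DifferentiableAt ℝ f p) (hh : DifferentiableAt ℝ h p) (h0 : h p ≠ 0) :
    Xd (fun z => f z / h z) p = (Xd f p * h p - f p * Xd h p) / h p ^ 2 :=
  fderiv_div_apply' hf hh h0

private lemma yd_div' {f h : ℝ × ℝ × ℝ → ℝ} {p : ℝ × ℝ × ℝ}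
    (hf : DifferentiableAt ℝ f p) (hh : DifferentiableAt ℝ h p) (h0 : h p ≠ 0) :
    Yd (fun z => f z / h z) p = (Yd f p * h p - f p * Yd h p) / h p ^ 2 :=
  fderiv_div_apply' hf hh h0

open Filter Topology

private noncomputable def cmX : (ℝ × ℝ × ℝ) →L[ℝ] (ℝ × ℝ × ℝ) :=
  (0 : (ℝ × ℝ × ℝ) →L[ℝ] ℝ).prod ((0 : (ℝ × ℝ × ℝ) →L[ℝ] ℝ).prod
    ((2 : ℝ) • ((ContinuousLinearMap.fst ℝ ℝ ℝ).comp (ContinuousLinearMap.snd ℝ ℝ (ℝ × ℝ)))))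

private noncomputable def cmY : (ℝ × ℝ × ℝ) →L[ℝ] (ℝ × ℝ × ℝ) :=
  (0 : (ℝ × ℝ × ℝ) →L[ℝ] ℝ).prod ((0 : (ℝ × ℝ × ℝ) →L[ℝ] ℝ).prod
    ((-2 : ℝ) • (ContinuousLinearMap.fst ℝ ℝ (ℝ × ℝ))))

private lemma hasFDerivAt_vX (p : ℝ × ℝ × ℝ) :
    HasFDerivAt (fun z : ℝ × ℝ × ℝ => ((1 : ℝ), (0 : ℝ), 2 * z.2.1)) cmX p := by
  have h2 : HasFDerivAt (fun z : ℝ × ℝ × ℝ => 2 * z.2.1)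
      ((2 : ℝ) • ((ContinuousLinearMap.fst ℝ ℝ ℝ).comp (ContinuousLinearMap.snd ℝ ℝ (ℝ × ℝ)))) p := by
    exact ((2 : ℝ) • ((ContinuousLinearMap.fst ℝ ℝ ℝ).comp
      (ContinuousLinearMap.snd ℝ ℝ (ℝ × ℝ)))).hasFDerivAt
  exact HasFDerivAt.prodMk (hasFDerivAt_const _ _) (HasFDerivAt.prodMk (hasFDerivAt_const _ _) h2)

private lemma hasFDerivAt_vY (p : ℝ × ℝ × ℝ) :
    HasFDerivAt (fun z : ℝ × ℝ × ℝ => ((0 : ℝ), (1 : ℝ), -(2 * z.1))) cmY p := by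
  have h2 : HasFDerivAt (fun z : ℝ × ℝ × ℝ => -(2 * z.1))
      ((-2 : ℝ) • (ContinuousLinearMap.fst ℝ ℝ (ℝ × ℝ))) p := by
    have := ((-2 : ℝ) • (ContinuousLinearMap.fst ℝ ℝ (ℝ × ℝ))).hasFDerivAt (x := p)
    convert this using 2 with z
    simp
  exact HasFDerivAt.prodMk (hasFDerivAt_const _ _) (HasFDerivAt.prodMk (hasFDerivAt_const _ _) h2)

section main
variable {U : Set (ℝ × ℝ × ℝ)} {u : ℝ × ℝ × ℝ → ℝ} {p : ℝ × ℝ × ℝ}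

private lemma hasFDerivAt_D (hU : IsOpen U) (hu : ContDiffOn ℝ 2 u U) (hp : p ∈ U) :
    HasFDerivAt (fderiv ℝ u) (fderiv ℝ (fderiv ℝ u) p) p := by
  have h1 : ContDiffAt ℝ 2 u p := hu.contDiffAt (hU.mem_nhds hp)
  have h2 : ContDiffAt ℝ 1 (fderiv ℝ u) p := h1.fderiv_right (by norm_num)
  exact (h2.differentiableAt one_ne_zero).hasFDerivAt

private lemma hasFDerivAt_Xd (hU : IsOpen U) (hu : ContDiffOn ℝ 2 u U) (hp : p ∈ U) :
    HasFDerivAt (fun z => Xd u z)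
      ((fderiv ℝ u p).comp cmX + (fderiv ℝ (fderiv ℝ u) p).flip (1, 0, 2 * p.2.1)) p := by
  unfold Xd
  exact (hasFDerivAt_D hU hu hp).clm_apply (hasFDerivAt_vX p)

private lemma hasFDerivAt_Yd (hU : IsOpen U) (hu : ContDiffOn ℝ 2 u U) (hp : p ∈ U) :
    HasFDerivAt (fun z => Yd u z)
      ((fderiv ℝ u p).comp cmY + (fderiv ℝ (fderiv ℝ u) p).flip (0, 1, -(2 * p.1))) p := by
  unfold Yd
  exact (hasFDerivAt_D hU hu hp).clm_apply (hasFDerivAt_vY p)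

private lemma heisComm (hU : IsOpen U) (hu : ContDiffOn ℝ 2 u U) (hp : p ∈ U) :
    Xd (fun z => Yd u z) p - Yd (fun z => Xd u z) p = -4 * Td u p := by
  have hD := hasFDerivAt_D hU hu hp
  have hsymm : ∀ v w, fderiv ℝ (fderiv ℝ u) p v w = fderiv ℝ (fderiv ℝ u) p w v := by
    intro v w
    apply second_derivative_symmetric_of_eventually_of_real (f := u) _ hD
    filter_upwards [hU.mem_nhds hp] with z hz
    exact ((hu.contDiffAt (hU.mem_nhds hz)).differentiableAt two_ne_zero).hasFDerivAt
  have hX := (hasFDerivAt_Xd hU hu hp).fderiv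
  have hY := (hasFDerivAt_Yd hU hu hp).fderiv
  have eX : Xd (fun z => Yd u z) p
      = fderiv ℝ u p (cmY (1, 0, 2 * p.2.1))
        + fderiv ℝ (fderiv ℝ u) p (1, 0, 2 * p.2.1) (0, 1, -(2 * p.1)) := by
    show fderiv ℝ (fun z => Yd u z) p (1, 0, 2 * p.2.1) = _
    rw [hY]
    simp [ContinuousLinearMap.add_apply, ContinuousLinearMap.comp_apply,
      ContinuousLinearMap.flip_apply]
  have eY : Yd (fun z => Xd u z) p
      = fderiv ℝ u p (cmX (0, 1, -(2 * p.1)))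
        + fderiv ℝ (fderiv ℝ u) p (0, 1, -(2 * p.1)) (1, 0, 2 * p.2.1) := by
    show fderiv ℝ (fun z => Xd u z) p (0, 1, -(2 * p.1)) = _
    rw [hX]
    simp [ContinuousLinearMap.add_apply, ContinuousLinearMap.comp_apply,
      ContinuousLinearMap.flip_apply]
  have ecY : cmY ((1 : ℝ), (0 : ℝ), 2 * p.2.1) = ((0 : ℝ), (0 : ℝ), (-2 : ℝ)) := by
    simp [cmY]
  have ecX : cmX ((0 : ℝ), (1 : ℝ), -(2 * p.1)) = ((0 : ℝ), (0 : ℝ), (2 : ℝ)) := by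
    simp [cmX]
  have em2 : fderiv ℝ u p ((0 : ℝ), (0 : ℝ), (-2 : ℝ)) = -2 * Td u p := by
    have : ((0 : ℝ), (0 : ℝ), (-2 : ℝ)) = (-2 : ℝ) • ((0 : ℝ), (0 : ℝ), (1 : ℝ)) := by
      simp [Prod.smul_def]
    rw [this, map_smul]
    simp [Td, smul_eq_mul]
  have ep2 : fderiv ℝ u p ((0 : ℝ), (0 : ℝ), (2 : ℝ)) = 2 * Td u p := by
    have : ((0 : ℝ), (0 : ℝ), (2 : ℝ)) = (2 : ℝ) • ((0 : ℝ), (0 : ℝ), (1 : ℝ)) := by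
      simp [Prod.smul_def]
    rw [this, map_smul]
    simp [Td, smul_eq_mul]
  rw [eX, eY, ecX, ecY, em2, ep2, hsymm]
  ring



/-- For a surface normalized by `Tu ≡ 1` in the Heisenberg group, the horizontal
Gauss curvature and the symplectic distortion satisfy `K = (4/‖∇_H u‖)·Q`;
in particular `K = 0 ↔ Q = 0` at noncharacteristic points. -/
theorem kgauss_eq_qdist_of_Tu_eq_one
    (U : Set (ℝ × ℝ × ℝ)) (hU : IsOpen U) (u : ℝ × ℝ × ℝ → ℝ)
    (hu : ContDiffOn ℝ 2 u U) (hT : ∀ p ∈ U, Td u p = 1) :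
    ∀ p ∈ U, gradH u p ≠ 0 →
      Kgauss u p = (4 / gradH u p) * Qdist u p ∧
      (Kgauss u p = 0 ↔ Qdist u p = 0) := by
  intro p hp hg
  have hDA : DifferentiableAt ℝ (fun z => Xd u z) p :=
    (hasFDerivAt_Xd hU hu hp).differentiableAt
  have hDB : DifferentiableAt ℝ (fun z => Yd u z) p :=
    (hasFDerivAt_Yd hU hu hp).differentiableAt
  have hs : (Xd u p) ^ 2 + (Yd u p) ^ 2 ≠ 0 := fun h => hg (by simp [gradH, h])
  have hG : DifferentiableAt ℝ (fun z => gradH u z) p := by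
    have hsum : DifferentiableAt ℝ (fun z => (Xd u z) ^ 2 + (Yd u z) ^ 2) p :=
      (hDA.pow 2).add (hDB.pow 2)
    exact hsum.sqrt hs
  have hT1 : Td u p = 1 := hT p hp
  have hev : (fun z => Td u z / gradH u z) =ᶠ[nhds p] fun z => 1 / gradH u z := by
    filter_upwards [hU.mem_nhds hp] with z hz
    rw [hT z hz]
  have eXT : Xd (fun z => Td u z / gradH u z) p = Xd (fun z => 1 / gradH u z) p := by
    unfold Xd; rw [hev.fderiv_eq]
  have eYT : Yd (fun z => Td u z / gradH u z) p = Yd (fun z => 1 / gradH u z) p := by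
    unfold Yd; rw [hev.fderiv_eq]
  have hone : DifferentiableAt ℝ (fun _ : ℝ × ℝ × ℝ => (1 : ℝ)) p := differentiableAt_const 1
  have hcX : Xd (fun _ : ℝ × ℝ × ℝ => (1 : ℝ)) p = 0 := by simp [Xd]
  have hcY : Yd (fun _ : ℝ × ℝ × ℝ => (1 : ℝ)) p = 0 := by simp [Yd]
  have eX1 : Xd (fun z => 1 / gradH u z) p = -(Xd (fun z => gradH u z) p) / gradH u p ^ 2 := by
    rw [xd_div' hone hG hg, hcX]; ring
  have eY1 : Yd (fun z => 1 / gradH u z) p = -(Yd (fun z => gradH u z) p) / gradH u p ^ 2 := by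
    rw [yd_div' hone hG hg, hcY]; ring
  have eQ1 : Xd (fun z => Yd u z / gradH u z) p
      = (Xd (fun z => Yd u z) p * gradH u p - Yd u p * Xd (fun z => gradH u z) p)
        / gradH u p ^ 2 := xd_div' hDB hG hg
  have eQ2 : Yd (fun z => Xd u z / gradH u z) p
      = (Yd (fun z => Xd u z) p * gradH u p - Xd u p * Yd (fun z => gradH u z) p)
        / gradH u p ^ 2 := yd_div' hDA hG hg
  have comm := heisComm hU hu hp
  rw [hT1] at comm
  set a := Xd u p
  set b := Yd u p
  set g := gradH u p
  set gx := Xd (fun z => gradH u z) p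
  set gy := Yd (fun z => gradH u z) p
  set axy := Xd (fun z => Yd u z) p
  set ayx := Yd (fun z => Xd u z) p
  have hcomm : axy = ayx - 4 := by linarith
  have key : Kgauss u p = (4 / g) * Qdist u p := by
    simp only [Kgauss, E1d, Qdist]
    rw [eXT, eYT, eX1, eY1, eQ1, eQ2, hT1, hcomm]
    simp only [show gradH u p = g from rfl]
    field_simp
    ring
  refine ⟨key, ?_⟩
  rw [key]
  constructor
  · intro h
    rcases mul_eq_zero.1 h with h' | h'
    · exact absurd h' (div_ne_zero (by norm_num) hg)
    · exact h'
  · intro h; rw [h, mul_zero]
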